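/- With h(t) = t^r(1-t)^n, r ≥ 1, and t_2 the right inflection point (h strictly convex on (t_2,1]), if p* maximizes ∑_{u=1}^k h(p(u)) over Δ_k, then at most one coordinate of p* lies in (t_2, 1]. -/

import Mathlib

private lemma sum_upd2 {k : ℕ} (g : Fin k → ℝ) (u v : Fin k) (huv : u ≠ v) (x y : ℝ) :
    ∑ w, Function.update (Function.update g v y) u x w = ∑ w, g w - g u - g v + x + y := by
  have hvmem : v ∈ Finset.univ \ {u} := by simp [huv.symm]
  rw [Finset.sum_update_of_mem (Finset.mem_univ u)]
  have h2 := Finset.sum_update_of_mem hvmem g y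
  rw [h2]
  have e1 : ∑ w, g w = ∑ w ∈ Finset.univ \ {u}, g w + g u :=
    (Finset.sum_eq_sum_sdiff_singleton_add (Finset.mem_univ u) g)
  have e2 : ∑ w ∈ Finset.univ \ {u}, g w = ∑ w ∈ (Finset.univ \ {u}) \ {v}, g w + g v :=
    (Finset.sum_eq_sum_sdiff_singleton_add hvmem g)
  linarith

/-- Property 4: With `h(t) = t^r (1-t)^n`, `r ≥ 1`, and `t₂` the right
inflection point (`h` convex on `[t₂, 1]` and strictly convex on `(t₂, 1]`), if `p*`
maximizes `∑_u h(p u)` over the simplex `Δ_k`, then at most one coordinate of `p*`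
lies in `(t₂, 1]`. -/
theorem maximizer_at_most_one_right (k : ℕ) (r : ℝ) (hr : 1 ≤ r)
    (n : ℕ) (hn : 1 ≤ n) (t2 : ℝ) (ht2 : t2 < 1)
    (hconv : ConvexOn ℝ (Set.Icc t2 (1 : ℝ)) (fun t : ℝ => t ^ r * (1 - t) ^ n))
    (hsconv : StrictConvexOn ℝ (Set.Ioc t2 (1 : ℝ)) (fun t : ℝ => t ^ r * (1 - t) ^ n))
    (p : Fin k → ℝ) (hp0 : ∀ u, 0 ≤ p u) (hp1 : ∑ u, p u = 1)
    (hopt : ∀ q : Fin k → ℝ, (∀ u, 0 ≤ q u) → ∑ u, q u = 1 →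
      ∑ u, q u ^ r * (1 - q u) ^ n ≤ ∑ u, p u ^ r * (1 - p u) ^ n)
    (u v : Fin k) (hu : p u ∈ Set.Ioc t2 1) (hv : p v ∈ Set.Ioc t2 1) :
    u = v := by
  by_contra huv
  -- step 1 : t2 ≥ 0
  have ht20 : 0 ≤ t2 := by
    by_contra hneg
    push_neg at hneg
    have h0 : (0:ℝ) ∈ Set.Ioc t2 1 := ⟨hneg, by norm_num⟩
    have h1 : (1:ℝ) ∈ Set.Ioc t2 1 := ⟨by linarith, le_refl 1⟩
    have key := hsconv.2 h0 h1 (by norm_num)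
      (show (0:ℝ) < 1/2 by norm_num) (show (0:ℝ) < 1/2 by norm_num) (by norm_num)
    simp only [smul_eq_mul, mul_zero, mul_one, zero_add] at key
    have hv0 : (0:ℝ) ^ r * (1 - 0) ^ n = 0 := by
      rw [Real.zero_rpow (by linarith : r ≠ 0)]; ring
    have hv1 : (1:ℝ) ^ r * (1 - 1) ^ n = 0 := by
      rw [sub_self, zero_pow (by omega : n ≠ 0)]; ring
    have hvhalf : 0 < ((1:ℝ)/2) ^ r * (1 - 1/2) ^ n := by
      have := Real.rpow_pos_of_pos (by norm_num : (0:ℝ) < 1/2) r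
      positivity
    rw [hv0, hv1] at key
    norm_num at key
    linarith
  -- main symmetric argument
  have main : ∀ u' v' : Fin k, u' ≠ v' → p u' ∈ Set.Ioc t2 1 → p v' ∈ Set.Ioc t2 1 →
      p v' ≤ p u' → False := by
    intro u v huv hu hv hle
    set a := p u with ha
    set b := p v with hb
    have hbpos : 0 < b := lt_of_le_of_lt ht20 hv.1
    have hab1 : a + b ≤ 1 := by
      have hsub : ({u, v} : Finset (Fin k)) ⊆ Finset.univ := Finset.subset_univ _
      have := Finset.sum_le_sum_of_subset_of_nonneg hsub (fun i _ _ => hp0 i)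
      rw [Finset.sum_pair huv, hp1] at this
      exact this
    have halt1 : a < 1 := by linarith
    set δ : ℝ := min (1 - a) ((b - t2)/2) with hδ
    have hδpos : 0 < δ := lt_min (by linarith) (by linarith [hv.1])
    have hδ1 : a + δ ≤ 1 := by
      have := min_le_left (1 - a) ((b - t2)/2); linarith
    have hδ2 : t2 < b - δ := by
      have := min_le_right (1 - a) ((b - t2)/2); linarith [hv.1]
    have hbδ0 : 0 ≤ b - δ := by linarith
    set x := b - δ with hx
    set y := a + δ with hy
    have hxmem : x ∈ Set.Ioc t2 1 := ⟨hδ2, by linarith [hv.2]⟩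
    have hymem : y ∈ Set.Ioc t2 1 := ⟨lt_of_lt_of_le hu.1 (by simp only [hy]; linarith), hδ1⟩
    have hxy : x < y := by simp only [hx, hy]; linarith
    set s := y - x with hs
    have hspos : 0 < s := by linarith
    set c1 := δ / s with hc1
    set c2 := (s - δ) / s with hc2
    have hc1pos : 0 < c1 := div_pos hδpos hspos
    have hc2pos : 0 < c2 := div_pos (by show (0:ℝ) < s - δ; rw [hs, hx, hy]; linarith) hspos
    have hcsum : c1 + c2 = 1 := by rw [hc1, hc2]; field_simp; ring
    have haeq : c1 * x + c2 * y = a := by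
      have hsne : s ≠ 0 := ne_of_gt hspos
      rw [hc1, hc2]
      field_simp
      rw [hs, hx, hy]; ring
    have hbeq : c2 * x + c1 * y = b := by
      have hsne : s ≠ 0 := ne_of_gt hspos
      rw [hc1, hc2]
      field_simp
      rw [hs, hx, hy]; ring
    have k1 := hsconv.2 hxmem hymem (ne_of_lt hxy) hc1pos hc2pos hcsum
    have k2 := hsconv.2 hxmem hymem (ne_of_lt hxy) hc2pos hc1pos (by linarith)
    simp only [smul_eq_mul, haeq] at k1
    simp only [smul_eq_mul, hbeq] at k2
    -- key strict inequality
    have e1 : c1 * (x ^ r * (1 - x) ^ n) + c2 * (x ^ r * (1 - x) ^ n) = x ^ r * (1 - x) ^ n := by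
      rw [← add_mul, hcsum, one_mul]
    have e2 : c1 * (y ^ r * (1 - y) ^ n) + c2 * (y ^ r * (1 - y) ^ n) = y ^ r * (1 - y) ^ n := by
      rw [← add_mul, hcsum, one_mul]
    have hkey : a ^ r * (1 - a) ^ n + b ^ r * (1 - b) ^ n
        < x ^ r * (1 - x) ^ n + y ^ r * (1 - y) ^ n := by linarith
    -- build the competitor q
    set q : Fin k → ℝ := Function.update (Function.update p v x) u y with hq
    have hq0 : ∀ w, 0 ≤ q w := by
      intro w
      simp only [hq, Function.update_apply]
      split_ifs with h1 h2
      · have : t2 < y := hymem.1; linarith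
      · exact hbδ0
      · exact hp0 w
    have hq1 : ∑ w, q w = 1 := by
      rw [hq, sum_upd2 p u v huv y x, hp1]
      simp only [hx, hy]; ring
    have hqsum : ∑ w, q w ^ r * (1 - q w) ^ n = ∑ w, p w ^ r * (1 - p w) ^ n
        - a ^ r * (1 - a) ^ n - b ^ r * (1 - b) ^ n
        + y ^ r * (1 - y) ^ n + x ^ r * (1 - x) ^ n := by
      have comp : ∀ w, q w ^ r * (1 - q w) ^ n =
          Function.update (Function.update (fun w => p w ^ r * (1 - p w) ^ n) v
            (x ^ r * (1 - x) ^ n)) u (y ^ r * (1 - y) ^ n) w := by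
        intro w
        simp only [hq, Function.update_apply]
        split_ifs <;> rfl
      rw [Finset.sum_congr rfl (fun w _ => comp w),
        sum_upd2 (fun w => p w ^ r * (1 - p w) ^ n) u v huv _ _]
    have hle2 := hopt q hq0 hq1
    rw [hqsum] at hle2
    linarith
  rcases le_total (p v) (p u) with hle | hle
  · exact absurd (main u v huv hu hv hle) not_false
  · exact absurd (main v u (Ne.symm huv) hv hu hle) not_false
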